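/- Let f₁,…,fₙ: ℝᵈ → ℝ each be L-smooth, and for an outlier subset O let ∇fᵢ(w) = ∇f_{i,I}(w) + hᵢ(w) with ‖hᵢ(w)‖ ≥ max(1, ‖∇f_{i,I}(w)‖), while ∇fᵢ(w) = ∇f_{i,I}(w) for inliers. Then for a uniformly random index i: E_i[‖∇fᵢ(w)‖²] ≤ 2L·(f_I(w) - f_I*) + 2L·Δ + 3λ·(1/n_O)·Σ_{i∈O}‖hᵢ(w)‖², where f_I(w) = (1/n)Σᵢ f_{i,I}(w), f_I* = min_w f_I(w), Δ = (1/n)Σᵢ(f_I* - min_w f_{i,I}(w)), and λ = n_O/n. -/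

import Mathlib

open Finset
open scoped RealInnerProductSpace

lemma grad_sq_le_aux {d : ℕ} (L : ℝ) (hL : 0 < L) (g : EuclideanSpace ℝ (Fin d) → ℝ)
    (hs : ∀ x y, g y ≤ g x + ⟪gradient g x, y - x⟫ + L / 2 * ‖y - x‖ ^ 2)
    (m : ℝ) (hm : IsGLB (Set.range g) m) (w : EuclideanSpace ℝ (Fin d)) :
    ‖gradient g w‖ ^ 2 ≤ 2 * L * (g w - m) := by
  set v := gradient g w with hv
  have h1 := hs w (w - L⁻¹ • v)
  have hy : w - L⁻¹ • v - w = -(L⁻¹ • v) := by abel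
  rw [hy] at h1
  have hip : ⟪v, -(L⁻¹ • v)⟫ = -(L⁻¹ * ‖v‖ ^ 2) := by
    rw [inner_neg_right, real_inner_smul_right, real_inner_self_eq_norm_sq]
  have hnorm : ‖-(L⁻¹ • v)‖ ^ 2 = L⁻¹ ^ 2 * ‖v‖ ^ 2 := by
    rw [norm_neg, norm_smul, mul_pow]
    simp [abs_of_nonneg (le_of_lt (inv_pos.mpr hL))]
  rw [hip, hnorm] at h1
  have hmle : m ≤ g (w - L⁻¹ • v) := hm.1 ⟨_, rfl⟩
  have hLi : L * L⁻¹ = 1 := mul_inv_cancel₀ (ne_of_gt hL)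
  have hsimp : L / 2 * (L⁻¹ ^ 2 * ‖v‖ ^ 2) = L⁻¹ / 2 * ‖v‖ ^ 2 := by
    field_simp
  rw [hsimp] at h1
  have h2 : m ≤ g w - L⁻¹ / 2 * ‖v‖ ^ 2 := by linarith [hmle.trans h1]
  have h3 : L * (L⁻¹ * ‖v‖ ^ 2) = ‖v‖ ^ 2 := by rw [← mul_assoc, hLi, one_mul]
  nlinarith [mul_le_mul_of_nonneg_left h2 (le_of_lt hL)]

/-- Second-moment bound on observed gradients under additive outlier
perturbations, for L-smooth outlier-free components. -/
theorem stmt_13 (n d nO : ℕ) (hn : 0 < n) (hnO : 0 < nO)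
    (O : Finset (Fin n)) (hOcard : O.card = nO)
    (L : ℝ) (hL : 0 < L)
    (fI : Fin n → EuclideanSpace ℝ (Fin d) → ℝ)
    (hsmooth : ∀ i x y, fI i y ≤ fI i x + ⟪gradient (fI i) x, y - x⟫
        + L / 2 * ‖y - x‖ ^ 2)
    (gobs h : Fin n → EuclideanSpace ℝ (Fin d) → EuclideanSpace ℝ (Fin d))
    (hout : ∀ i ∈ O, ∀ w, gobs i w = gradient (fI i) w + h i w)
    (hin : ∀ i ∉ O, ∀ w, gobs i w = gradient (fI i) w)
    (hlow : ∀ i ∈ O, ∀ w, (1:ℝ) ≤ ‖h i w‖ ∧ ‖gradient (fI i) w‖ ≤ ‖h i w‖)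
    (m : Fin n → ℝ) (hm : ∀ i, IsGLB (Set.range (fI i)) (m i))
    (fIavg : EuclideanSpace ℝ (Fin d) → ℝ)
    (hfIavg : fIavg = fun w => (1 / (n : ℝ)) * ∑ i, fI i w)
    (fIstar : ℝ) (hstar : IsGLB (Set.range fIavg) fIstar)
    (w : EuclideanSpace ℝ (Fin d)) :
    (1 / (n : ℝ)) * ∑ i, ‖gobs i w‖ ^ 2
      ≤ 2 * L * (fIavg w - fIstar)
        + 2 * L * ((1 / (n : ℝ)) * ∑ i, (fIstar - m i))
        + 3 * ((nO : ℝ) / (n : ℝ)) * ((1 / (nO : ℝ)) * ∑ i ∈ O, ‖h i w‖ ^ 2) := by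
  have hn' : (0:ℝ) < n := Nat.cast_pos.mpr hn
  have hnO' : (0:ℝ) < nO := Nat.cast_pos.mpr hnO
  have key : ∀ i, ‖gobs i w‖ ^ 2
      ≤ 2 * L * (fI i w - m i) + (if i ∈ O then 3 * ‖h i w‖ ^ 2 else 0) := by
    intro i
    have hg := grad_sq_le_aux L hL (fI i) (hsmooth i) (m i) (hm i) w
    by_cases hi : i ∈ O
    · simp only [if_pos hi]
      rw [hout i hi w]
      have hb := (hlow i hi w).2
      have hexp := norm_add_sq_real (gradient (fI i) w) (h i w)
      have hc : ⟪gradient (fI i) w, h i w⟫ ≤ ‖gradient (fI i) w‖ * ‖h i w‖ :=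
        real_inner_le_norm _ _
      nlinarith [norm_nonneg (h i w), norm_nonneg (gradient (fI i) w)]
    · simp only [if_neg hi]
      rw [hin i hi w]
      linarith
  have hsum : ∑ i, ‖gobs i w‖ ^ 2
      ≤ ∑ i, (2 * L * (fI i w - m i)) + ∑ i ∈ O, 3 * ‖h i w‖ ^ 2 := by
    have := Finset.sum_le_sum (fun i (_ : i ∈ Finset.univ) => key i)
    rw [Finset.sum_add_distrib] at this
    rwa [Finset.sum_ite_mem, Finset.univ_inter] at this
  have hrhs : 2 * L * (fIavg w - fIstar)
        + 2 * L * ((1 / (n : ℝ)) * ∑ i, (fIstar - m i))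
        + 3 * ((nO : ℝ) / (n : ℝ)) * ((1 / (nO : ℝ)) * ∑ i ∈ O, ‖h i w‖ ^ 2)
      = (1 / (n : ℝ)) * (∑ i, (2 * L * (fI i w - m i)) + ∑ i ∈ O, 3 * ‖h i w‖ ^ 2) := by
    rw [hfIavg]
    have e1 : ∑ i, (2 * L * (fI i w - m i))
        = 2 * L * ((∑ i, fI i w) - ∑ i, m i) := by
      rw [← Finset.sum_sub_distrib, Finset.mul_sum]
    have e2 : ∑ i : Fin n, (fIstar - m i) = n * fIstar - ∑ i, m i := by
      rw [Finset.sum_sub_distrib, Finset.sum_const, Finset.card_univ,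
        Fintype.card_fin, nsmul_eq_mul]
    have e3 : ∑ i ∈ O, (3 * ‖h i w‖ ^ 2) = 3 * ∑ i ∈ O, ‖h i w‖ ^ 2 :=
      by rw [Finset.mul_sum]
    have hne : (n : ℝ) ≠ 0 := ne_of_gt hn'
    have hnOne : (nO : ℝ) ≠ 0 := ne_of_gt hnO'
    rw [e1, e2, e3]
    field_simp
    ring
  rw [hrhs]
  have := mul_le_mul_of_nonneg_left hsum (le_of_lt (one_div_pos.mpr hn'))
  linarith
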